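/- arXiv:2410.01115 — 4 statements merged into one kernel-verified Lean document; each statement's English description precedes it below -/
import Mathlib

section
/- For k ∈ {0,1}, let Ω_k = {(z_1, z_2) ∈ ℂ² : |z_2| < exp(−|z_1|^{1/2^k})}. Then for all j, m ∈ ℕ, ∫_{Ω_k} |z_1|^j |z_2|^m dv(z_1,z_2) = (2^{k+2} π² / (m+2)^{2^k(j+2)+1}) · (2^k(j+2) − 1)!. -/
open MeasureTheory Complex

noncomputable section

/-- The domain `Ω_k = {(z₁,z₂) ∈ ℂ² : |z₂| < exp(-|z₁|^{1/2^k})}`. -/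
def OmegaK (k : ℕ) : Set (ℂ × ℂ) :=
  {z : ℂ × ℂ | ‖z.2‖ < Real.exp (-(‖z.1‖ ^ ((1 : ℝ) / 2 ^ k)))}

/-- The `L²(Ω)` norm of a function on `ℂ²`. -/
def L2normC2 (Ω : Set (ℂ × ℂ)) (f : ℂ × ℂ → ℂ) : ℝ :=
  (∫ z in Ω, ‖f z‖ ^ 2) ^ ((1 : ℝ) / 2)

/-- Membership in the Bergman space `A²(Ω)` for `Ω ⊆ ℂ²`. -/
def MemBergmanC2 (Ω : Set (ℂ × ℂ)) (f : ℂ × ℂ → ℂ) : Prop :=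
  DifferentiableOn ℂ f Ω ∧ MemLp f 2 (volume.restrict Ω)

end

section Aux

open Real Set MeasureTheory MeasureTheory.Measure

theorem Complex.integral_rpow_mul_exp_neg_mul_rpow' {p q b : ℝ} (hp : 0 < p) (hq : - 2 < q)
    (hb : 0 < b) :
    ∫ x : ℂ, ‖x‖ ^ q * rexp (- b * ‖x‖ ^ p) = (2 * π / p) *
      b ^ (-(q + 2) / p) * Real.Gamma ((q + 2) / p) := by
  calc
    _ = ∫ x in Ioi (0 : ℝ) ×ˢ Ioo (-π) π, x.1 * (|x.1| ^ q * rexp (- b * |x.1| ^ p)) := by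
      rw [← Complex.integral_comp_polarCoord_symm, _root_.polarCoord_target]
      simp_rw [Complex.norm_polarCoord_symm, smul_eq_mul]
    _ = (∫ x in Ioi (0 : ℝ), x * |x| ^ q * rexp (- b * |x| ^ p)) * ∫ _ in Ioo (-π) π, 1 := by
      rw [← setIntegral_prod_mul, volume_eq_prod]
      simp_rw [mul_one]
      congr! 2; ring
    _ = 2 * π * ∫ x in Ioi (0 : ℝ), x * |x| ^ q * rexp (- b * |x| ^ p) := by
      simp_rw [integral_const, measureReal_def, Measure.restrict_apply MeasurableSet.univ, Set.univ_inter,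
        volume_Ioo, sub_neg_eq_add, ← two_mul, ENNReal.toReal_ofReal (by positivity : 0 ≤ 2 * π),
        smul_eq_mul, mul_one, mul_comm]
    _ = 2 * π * ∫ x in Ioi (0 : ℝ), x ^ (q + 1) * rexp (-b * x ^ p) := by
      congr 1
      refine setIntegral_congr_fun measurableSet_Ioi (fun x hx => ?_)
      rw [mem_Ioi] at hx
      rw [abs_eq_self.mpr hx.le, rpow_add hx, rpow_one]
      ring
    _ = (2 * π / p) * b ^ (-(q + 2) / p) * Real.Gamma ((q + 2) / p) := by
      rw [_root_.integral_rpow_mul_exp_neg_mul_rpow hp (by linarith) hb, add_assoc,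
        one_add_one_eq_two]
      ring

theorem Complex.integral_ball_norm_pow (m : ℕ) {R : ℝ} (hR : 0 < R) :
    ∫ w : ℂ in Metric.ball (0 : ℂ) R, ‖w‖ ^ m = 2 * π * R ^ (m + 2) / (m + 2) := by
  have h1 : ∫ w : ℂ in Metric.ball (0 : ℂ) R, ‖w‖ ^ m
      = ∫ w : ℂ, (Metric.ball (0 : ℂ) R).indicator (fun w => ‖w‖ ^ m) w :=
    (integral_indicator measurableSet_ball).symm
  rw [h1, ← Complex.integral_comp_polarCoord_symm, _root_.polarCoord_target]
  calc
    _ = ∫ x in Ioi (0 : ℝ) ×ˢ Ioo (-π) π,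
        ((Ioo (0:ℝ) R).indicator (fun r => r ^ (m + 1)) x.1) * (fun _ : ℝ => (1:ℝ)) x.2 := by
      refine setIntegral_congr_fun ((measurableSet_Ioi).prod measurableSet_Ioo) (fun x hx => ?_)
      obtain ⟨hx1, _⟩ := hx
      rw [mem_Ioi] at hx1
      simp only [smul_eq_mul, mul_one]
      classical
      rw [Set.indicator_apply, Set.indicator_apply]
      have habs : ‖Complex.polarCoord.symm x‖ = |x.1| := Complex.norm_polarCoord_symm x
      by_cases h : x.1 < R
      · rw [if_pos, if_pos ⟨hx1, h⟩]
        · rw [habs, abs_of_pos hx1]; ring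
        · rw [Metric.mem_ball, dist_zero_right, habs, abs_of_pos hx1]; exact h
      · rw [if_neg, if_neg (fun hmem => h hmem.2)]
        · ring
        · rw [Metric.mem_ball, dist_zero_right, habs, abs_of_pos hx1]; exact h
    _ = (∫ r in Ioi (0:ℝ), (Ioo (0:ℝ) R).indicator (fun r => r ^ (m + 1)) r)
          * ∫ _ in Ioo (-π) π, (1:ℝ) := by
      rw [← setIntegral_prod_mul, volume_eq_prod]
    _ = (∫ r in Ioo (0:ℝ) R, r ^ (m + 1)) * (2 * π) := by
      congr 1
      · rw [setIntegral_indicator measurableSet_Ioo]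
        congr 1
        rw [Set.inter_eq_right.mpr Ioo_subset_Ioi_self]
      · simp only [integral_const, measureReal_def, Measure.restrict_apply MeasurableSet.univ, Set.univ_inter,
          volume_Ioo, sub_neg_eq_add, ← two_mul,
          ENNReal.toReal_ofReal (by positivity : 0 ≤ 2 * π), smul_eq_mul, mul_one]
    _ = 2 * π * R ^ (m + 2) / (m + 2) := by
      rw [← integral_Ioc_eq_integral_Ioo, ← intervalIntegral.integral_of_le hR.le,
        integral_pow]
      push_cast
      ring

theorem integrable_norm_pow_mul_exp_aux {b p : ℝ} (hb : 0 < b) (hp : 0 < p) (j K : ℕ)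
    (hK : (j + 3 : ℝ) ≤ p * K) :
    Integrable (fun x : ℂ => ‖x‖ ^ j * Real.exp (-b * ‖x‖ ^ p)) := by
  set C : ℝ := 2 ^ (j + 3) * (1 + K.factorial / b ^ K) with hC
  have hfact : (0:ℝ) ≤ K.factorial / b ^ K := by positivity
  have key : ∀ r : ℝ, 0 ≤ r → (1 + r) ^ (j + 3) * Real.exp (-b * r ^ p) ≤ C := by
    intro r hr
    rcases le_or_gt r 1 with h1 | h1
    · have h2 : (1 + r) ^ (j + 3) ≤ 2 ^ (j + 3) :=
        pow_le_pow_left₀ (by linarith) (by linarith) _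
      have h3 : Real.exp (-b * r ^ p) ≤ 1 := by
        rw [Real.exp_le_one_iff]
        have : 0 ≤ r ^ p := rpow_nonneg hr _
        nlinarith
      calc (1 + r) ^ (j + 3) * Real.exp (-b * r ^ p) ≤ 2 ^ (j + 3) * 1 :=
            mul_le_mul h2 h3 (Real.exp_pos _).le (by positivity)
        _ ≤ C := by rw [hC, mul_one]; nlinarith [pow_pos (show (0:ℝ) < 2 by norm_num) (j + 3)]
    · have hr0 : 0 < r := by linarith
      have hrp : 0 < r ^ p := rpow_pos_of_pos hr0 _
      have hexp : Real.exp (-b * r ^ p) ≤ K.factorial / (b * r ^ p) ^ K := by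
        have h4 : (b * r ^ p) ^ K / K.factorial ≤ Real.exp (b * r ^ p) :=
          Real.pow_div_factorial_le_exp _ (by positivity) K
        rw [neg_mul, Real.exp_neg, inv_eq_one_div,
          div_le_div_iff₀ (Real.exp_pos _) (by positivity)]
        rw [div_le_iff₀ (by positivity)] at h4
        calc 1 * (b * r ^ p) ^ K = (b * r ^ p) ^ K := one_mul _
          _ ≤ Real.exp (b * r ^ p) * K.factorial := h4
          _ = K.factorial * Real.exp (b * r ^ p) := mul_comm _ _
      have h5 : (1 + r) ^ (j + 3) ≤ 2 ^ (j + 3) * r ^ (j + 3) := by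
        rw [← mul_pow]
        exact pow_le_pow_left₀ (by linarith) (by linarith) _
      have h6 : r ^ (j + 3) ≤ (r ^ p) ^ K := by
        rw [← rpow_natCast r (j + 3), ← rpow_natCast (r ^ p) K, ← rpow_mul hr0.le]
        apply rpow_le_rpow_of_exponent_le h1.le
        push_cast
        linarith
      have hq : r ^ (j + 3) / (r ^ p) ^ K ≤ 1 := (div_le_one (by positivity)).mpr h6
      have heq : (2 ^ (j + 3) * r ^ (j + 3)) * ((K.factorial : ℝ) / (b * r ^ p) ^ K)
          = (2 ^ (j + 3) * (K.factorial / b ^ K)) * (r ^ (j + 3) / (r ^ p) ^ K) := by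
        rw [mul_pow]
        field_simp
      calc (1 + r) ^ (j + 3) * Real.exp (-b * r ^ p)
          ≤ (2 ^ (j + 3) * r ^ (j + 3)) * ((K.factorial : ℝ) / (b * r ^ p) ^ K) :=
            mul_le_mul h5 hexp (Real.exp_pos _).le (by positivity)
        _ = (2 ^ (j + 3) * (K.factorial / b ^ K)) * (r ^ (j + 3) / (r ^ p) ^ K) := heq
        _ ≤ (2 ^ (j + 3) * (K.factorial / b ^ K)) * 1 :=
            mul_le_mul_of_nonneg_left hq (by positivity)
        _ ≤ C := by rw [hC, mul_one]; nlinarith [pow_pos (show (0:ℝ) < 2 by norm_num) (j + 3)]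
  have hint : Integrable (fun x : ℂ => C * (1 + ‖x‖) ^ (-(3:ℝ))) :=
    (integrable_one_add_norm (E := ℂ) (by norm_num [Complex.finrank_real_complex])).const_mul C
  refine hint.mono' ?_ ?_
  · apply Measurable.aestronglyMeasurable
    fun_prop
  · filter_upwards with x
    set r : ℝ := ‖x‖ with hrdef
    have hr : 0 ≤ r := norm_nonneg x
    have h1r : (0:ℝ) < 1 + r := by linarith
    have hpow : (1 + r : ℝ) ^ (-(3:ℝ)) = ((1 + r) ^ (3:ℕ))⁻¹ := by
      rw [rpow_neg h1r.le, ← rpow_natCast (1 + r) 3]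
      norm_num
    rw [Real.norm_of_nonneg (by positivity), hpow, ← div_eq_mul_inv, le_div_iff₀ (by positivity)]
    calc r ^ j * Real.exp (-b * r ^ p) * (1 + r) ^ (3:ℕ)
        = (r ^ j * (1 + r) ^ (3:ℕ)) * Real.exp (-b * r ^ p) := by ring
      _ ≤ (1 + r) ^ (j + 3) * Real.exp (-b * r ^ p) := by
          apply mul_le_mul_of_nonneg_right _ (Real.exp_pos _).le
          rw [pow_add]
          exact mul_le_mul_of_nonneg_right
            (pow_le_pow_left₀ hr (by linarith) _) (by positivity)
      _ ≤ C := key r hr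

end Aux

open Real Set MeasureTheory.Measure in
/-- the moment integrals over the domains `Ω_k`, `k ∈ {0,1}`. -/
theorem momentIntegral_OmegaK (k : ℕ) (hk : k ≤ 1) (j m : ℕ) :
    ∫ z in OmegaK k, ‖z.1‖ ^ j * ‖z.2‖ ^ m =
      2 ^ (k + 2) * Real.pi ^ 2 / (m + 2 : ℝ) ^ (2 ^ k * (j + 2) + 1) *
        (Nat.factorial (2 ^ k * (j + 2) - 1)) := by
  have h2k : (0:ℝ) < 2 ^ k := by positivity
  set p : ℝ := (1:ℝ) / 2 ^ k with hpdef
  have hp : 0 < p := by positivity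
  set b : ℝ := (m : ℝ) + 2 with hbdef
  have hb : (0:ℝ) < b := by positivity
  set n : ℕ := 2 ^ k * (j + 2) with hndef
  have hn1 : 1 ≤ n := by
    have : 1 ≤ 2 ^ k := Nat.one_le_two_pow
    calc 1 ≤ 1 * (j + 2) := by omega
      _ ≤ 2 ^ k * (j + 2) := Nat.mul_le_mul_right _ this
  have hΩ : MeasurableSet (OmegaK k) := by
    apply measurableSet_lt
    · fun_prop
    · fun_prop
  have hgmeas : Measurable fun z : ℂ × ℂ => ENNReal.ofReal (‖z.1‖ ^ j * ‖z.2‖ ^ m) := by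
    fun_prop
  -- the outer radial function
  set F : ℂ → ℝ := fun z1 => (2 * π / b) * (‖z1‖ ^ j * Real.exp (-b * ‖z1‖ ^ p)) with hFdef
  have hKb : ((j:ℝ) + 3) ≤ p * ((2 ^ k * (j + 3) : ℕ) : ℝ) := by
    have : p * ((2 ^ k * (j + 3) : ℕ) : ℝ) = (j : ℝ) + 3 := by
      rw [hpdef]; push_cast; field_simp
    rw [this]
  have hFint : Integrable F :=
    (integrable_norm_pow_mul_exp_aux hb hp j (2 ^ k * (j + 3)) hKb).const_mul _
  have hFnn : ∀ z1 : ℂ, 0 ≤ F z1 := fun z1 => by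
    rw [hFdef]; positivity
  -- inner evaluation
  have hinner : ∀ z1 : ℂ,
      (∫⁻ z2 : ℂ, (OmegaK k).indicator
        (fun z => ENNReal.ofReal (‖z.1‖ ^ j * ‖z.2‖ ^ m)) (z1, z2)) = ENNReal.ofReal (F z1) := by
    intro z1
    set R : ℝ := Real.exp (-(‖z1‖ ^ p)) with hRdef
    have hR : 0 < R := Real.exp_pos _
    have hind : ∀ z2 : ℂ,
        (OmegaK k).indicator (fun z => ENNReal.ofReal (‖z.1‖ ^ j * ‖z.2‖ ^ m)) (z1, z2)
          = (Metric.ball (0:ℂ) R).indicator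
              (fun w => ENNReal.ofReal (‖z1‖ ^ j * ‖w‖ ^ m)) z2 := by
      intro z2
      classical
      have hmem : (z1, z2) ∈ OmegaK k ↔ z2 ∈ Metric.ball (0:ℂ) R := by
        simp only [OmegaK, Set.mem_setOf_eq, Metric.mem_ball, dist_zero_right, hRdef, hpdef]
      simp only [Set.indicator_apply]
      rw [if_congr hmem rfl rfl]
    simp_rw [hind]
    rw [lintegral_indicator measurableSet_ball]
    have hib : IntegrableOn (fun w : ℂ => ‖z1‖ ^ j * ‖w‖ ^ m) (Metric.ball (0:ℂ) R) := by
      have h1 : IntegrableOn (fun w : ℂ => ‖w‖ ^ m) (Metric.closedBall (0:ℂ) R) :=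
        (continuous_norm.pow m).continuousOn.integrableOn_compact (isCompact_closedBall _ _)
      exact (h1.mono_set Metric.ball_subset_closedBall).const_mul _
    rw [← ofReal_integral_eq_lintegral_ofReal hib
      (Filter.Eventually.of_forall fun w => by positivity)]
    rw [MeasureTheory.integral_const_mul, Complex.integral_ball_norm_pow m hR]
    congr 1
    have hRe : R ^ (m + 2) = Real.exp (-b * ‖z1‖ ^ p) := by
      rw [hRdef, ← Real.exp_nat_mul]
      congr 1
      rw [hbdef]
      push_cast
      ring
    rw [hFdef, hRe, hbdef]
    push_cast
    field_simp
  -- main computation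
  have hcont : Continuous fun z : ℂ × ℂ => ‖z.1‖ ^ j * ‖z.2‖ ^ m :=
    (continuous_fst.norm.pow j).mul (continuous_snd.norm.pow m)
  rw [MeasureTheory.integral_eq_lintegral_of_nonneg_ae
    (Filter.Eventually.of_forall fun z => by positivity)
    (hcont.aestronglyMeasurable)]
  have hlin : ∫⁻ z in OmegaK k, ENNReal.ofReal (‖z.1‖ ^ j * ‖z.2‖ ^ m)
      = ENNReal.ofReal ((2 * π / b) *
          ((2 * π / p) * b ^ (-((j:ℝ) + 2) / p) * Real.Gamma (((j:ℝ) + 2) / p))) := by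
    rw [← lintegral_indicator hΩ]
    rw [show (volume : Measure (ℂ × ℂ)) = (volume : Measure ℂ).prod volume from volume_eq_prod ℂ ℂ]
    rw [lintegral_prod _ (hgmeas.indicator hΩ).aemeasurable]
    rw [lintegral_congr hinner]
    rw [← ofReal_integral_eq_lintegral_ofReal hFint
      (Filter.Eventually.of_forall fun z1 => hFnn z1)]
    congr 1
    rw [hFdef]
    simp only
    rw [MeasureTheory.integral_const_mul]
    congr 1
    have := Complex.integral_rpow_mul_exp_neg_mul_rpow' (p := p) (q := (j:ℝ)) hp
      (by have : (0:ℝ) ≤ (j:ℝ) := Nat.cast_nonneg j; linarith) hb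
    simp_rw [Real.rpow_natCast] at this
    exact this
  rw [hlin]
  -- arithmetic
  have hexp1 : ((j:ℝ) + 2) / p = (n : ℝ) := by
    rw [hpdef, hndef]
    push_cast
    field_simp
  have hne : ((n - 1 : ℕ) : ℝ) + 1 = (n : ℝ) := by
    rw [Nat.cast_sub hn1]
    push_cast
    ring
  have hGamma : Real.Gamma ((n : ℝ)) = (n - 1).factorial := by
    rw [← hne, Real.Gamma_nat_eq_factorial]
  have hrpow : b ^ (-((j:ℝ) + 2) / p) = (b ^ n)⁻¹ := by
    rw [neg_div, hexp1, Real.rpow_neg hb.le, Real.rpow_natCast]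
  have hval : (2 * π / b) *
      ((2 * π / p) * b ^ (-((j:ℝ) + 2) / p) * Real.Gamma (((j:ℝ) + 2) / p))
      = 2 ^ (k + 2) * π ^ 2 / b ^ (n + 1) * ((n - 1).factorial : ℝ) := by
    rw [hrpow, hexp1, hGamma, hpdef]
    have hbn : (0:ℝ) < b ^ n := by positivity
    field_simp
    ring
  rw [hval, ENNReal.toReal_ofReal (by positivity)]
end

section
/- Let Ω_0 = {(z_1, z_2) ∈ ℂ² : |z_2| < exp(−|z_1|)}. Then every monomial z_1^{α_1} z_2^{α_2} (α ∈ ℕ²) belongs to A²(Ω_0), and Ω_0 satisfies Condition D; that is, Σ_{k=1}^∞ ‖z_1^k‖_{L²(Ω_0)}^{−1/k} = ∞ and Σ_{k=1}^∞ ‖z_2^k‖_{L²(Ω_0)}^{−1/k} = ∞. -/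
open MeasureTheory Complex

section Aux
open Set Metric Nat

lemma omega0_def : OmegaK 0 = {z : ℂ × ℂ | ‖z.2‖ < Real.exp (-‖z.1‖)} := by
  simp [OmegaK]

lemma isOpen_omega0 : IsOpen (OmegaK 0) := by
  rw [omega0_def]
  exact isOpen_lt (continuous_norm.comp continuous_snd)
    (Real.continuous_exp.comp (continuous_norm.comp continuous_fst).neg)

lemma pow_le_fact_mul_exp {x : ℝ} (hx : 0 ≤ x) (n : ℕ) :
    x ^ n ≤ (n ! : ℝ) * Real.exp x := by
  have h := Real.sum_le_exp_of_nonneg hx (n + 1)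
  have h1 : x ^ n / (n ! : ℝ) ≤ Real.exp x :=
    le_trans (Finset.single_le_sum (f := fun i => x ^ i / (i ! : ℝ))
      (fun i _ => by positivity) (Finset.self_mem_range_succ n)) h
  have hn : (0:ℝ) < (n ! : ℝ) := by positivity
  calc x ^ n = (x ^ n / (n ! : ℝ)) * (n ! : ℝ) := by field_simp
  _ ≤ Real.exp x * (n ! : ℝ) := mul_le_mul_of_nonneg_right h1 hn.le
  _ = (n ! : ℝ) * Real.exp x := mul_comm _ _

lemma poly_exp_bound (m : ℕ) {c r : ℝ} (hc : 0 < c) (hr : 0 ≤ r) :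
    r ^ m * Real.exp (-(c * r)) * (1 + r) ^ 3 ≤ 8 * (1 + ((m+3)! : ℝ) / c ^ (m+3)) := by
  have hfrac : (0:ℝ) ≤ ((m+3)! : ℝ) / c ^ (m+3) := by positivity
  rcases le_total r 1 with h | h
  · have h1 : r ^ m ≤ 1 := pow_le_one₀ hr h
    have h2 : Real.exp (-(c * r)) ≤ 1 := Real.exp_le_one_iff.mpr (by nlinarith)
    have h3 : (1 + r) ^ 3 ≤ 8 := by
      calc (1 + r) ^ 3 ≤ 2 ^ 3 := pow_le_pow_left₀ (by linarith) (by linarith) 3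
      _ = 8 := by norm_num
    have hle : r ^ m * Real.exp (-(c * r)) * (1 + r) ^ 3 ≤ 1 * 1 * 8 := by
      refine mul_le_mul (mul_le_mul h1 h2 (Real.exp_pos _).le (by norm_num)) h3
        (by positivity) (by norm_num)
    linarith
  · have h3 : (1 + r) ^ 3 ≤ 8 * r ^ 3 := by
      calc (1 + r) ^ 3 ≤ (2 * r) ^ 3 := pow_le_pow_left₀ (by linarith) (by linarith) 3
      _ = 8 * r ^ 3 := by ring
    have hpe : (c * r) ^ (m+3) ≤ ((m+3)! : ℝ) * Real.exp (c * r) :=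
      pow_le_fact_mul_exp (by positivity) (m+3)
    have hcp : (0:ℝ) < c ^ (m+3) := by positivity
    have h4 : c ^ (m+3) * (r ^ (m+3) * Real.exp (-(c*r))) ≤ ((m+3)! : ℝ) := by
      have h5 := mul_le_mul_of_nonneg_right hpe (Real.exp_pos (-(c*r))).le
      rw [mul_assoc, ← Real.exp_add, add_neg_cancel, Real.exp_zero, mul_one, mul_pow] at h5
      nlinarith [Real.exp_pos (-(c*r))]
    have key : r ^ (m+3) * Real.exp (-(c * r)) ≤ ((m+3)! : ℝ) / c ^ (m+3) := by
      rw [le_div_iff₀ hcp]; nlinarith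
    have hexp : (0:ℝ) < Real.exp (-(c*r)) := Real.exp_pos _
    calc r ^ m * Real.exp (-(c * r)) * (1 + r) ^ 3
        ≤ r ^ m * Real.exp (-(c * r)) * (8 * r ^ 3) := by
          exact mul_le_mul_of_nonneg_left h3 (by positivity)
    _ = 8 * (r ^ (m+3) * Real.exp (-(c*r))) := by ring
    _ ≤ 8 * (((m+3)! : ℝ) / c ^ (m+3)) := by linarith
    _ ≤ 8 * (1 + ((m+3)! : ℝ) / c ^ (m+3)) := by linarith

lemma integrable_aux (m : ℕ) {c : ℝ} (hc : 0 < c) :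
    Integrable (fun x : ℂ => ‖x‖ ^ m * Real.exp (-(c * ‖x‖))) := by
  have h3 : ((Module.finrank ℝ ℂ : ℝ)) < 3 := by
    rw [Complex.finrank_real_complex]; norm_num
  have hint : Integrable (fun x : ℂ => (8 * (1 + ((m+3)! : ℝ) / c ^ (m+3))) *
      (1 + ‖x‖) ^ (-(3:ℝ))) := (integrable_one_add_norm h3).const_mul _
  refine hint.mono' ?_ (Filter.Eventually.of_forall fun x => ?_)
  · exact ((continuous_norm.pow m).mul
      (((continuous_const.mul continuous_norm).neg).rexp)).aestronglyMeasurable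
  · have hr : (0:ℝ) ≤ ‖x‖ := norm_nonneg x
    have h1r : (0:ℝ) < 1 + ‖x‖ := by linarith
    have hrw : (1 + ‖x‖) ^ (-(3:ℝ)) = ((1 + ‖x‖) ^ (3:ℕ))⁻¹ := by
      rw [Real.rpow_neg h1r.le, ← Real.rpow_natCast (1 + ‖x‖) 3]; norm_num
    rw [Real.norm_of_nonneg (by positivity), hrw, ← div_eq_mul_inv,
      le_div_iff₀ (by positivity)]
    exact poly_exp_bound m hc hr

lemma complex_integral_eq (m : ℕ) {c : ℝ} (hc : 0 < c) :
    ∫ x : ℂ, ‖x‖ ^ m * Real.exp (-(c * ‖x‖)) =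
      2 * Real.pi * ((m+1)! : ℝ) / c ^ (m + 2) := by
  have hm2 : (-2:ℝ) < (m:ℝ) := by
    have : (0:ℝ) ≤ (m:ℝ) := Nat.cast_nonneg m
    linarith
  have h := Complex.integral_rpow_mul_exp_neg_mul_rpow (p := 1) (q := (m:ℝ)) le_rfl hm2 hc
  simp only [Real.rpow_one, div_one] at h
  have h1 : (fun x : ℂ => ‖x‖ ^ ((m:ℝ)) * Real.exp (-c * ‖x‖)) =
      fun x : ℂ => ‖x‖ ^ m * Real.exp (-(c * ‖x‖)) := by
    funext x
    rw [Real.rpow_natCast, neg_mul]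
  rw [h1] at h
  rw [h]
  have hG : Real.Gamma ((m:ℝ) + 2) = ((m+1)! : ℝ) := by
    have := Real.Gamma_nat_eq_factorial (m+1)
    rw [← this]
    push_cast
    ring_nf
  have hcp : c ^ (-((m:ℝ) + 2)) = (c ^ (m+2 : ℕ))⁻¹ := by
    rw [Real.rpow_neg hc.le, ← Real.rpow_natCast c (m+2)]
    norm_num
  rw [hG, hcp]
  field_simp

lemma norm_sq_bound (a b : ℕ) (x : ℂ) {y : ℂ} (hy : y ∈ ball (0:ℂ) (Real.exp (-‖x‖))) :
    ‖‖x‖ ^ a * ‖y‖ ^ b‖ ≤ ‖x‖ ^ a * Real.exp (-‖x‖) ^ b := by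
  rw [mem_ball_zero_iff] at hy
  rw [Real.norm_of_nonneg (by positivity)]
  exact mul_le_mul_of_nonneg_left (pow_le_pow_left₀ (norm_nonneg y) hy.le b)
    (by positivity)

lemma central (a b : ℕ) :
    IntegrableOn (fun z : ℂ × ℂ => ‖z.1‖ ^ a * ‖z.2‖ ^ b) (OmegaK 0) ∧
    ∫ z in OmegaK 0, ‖z.1‖ ^ a * ‖z.2‖ ^ b ≤
      2 * Real.pi ^ 2 * ((a+1)! : ℝ) / ((b : ℝ) + 2) ^ (a + 2) := by
  have hΩ : MeasurableSet (OmegaK 0) := isOpen_omega0.measurableSet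
  set g : ℂ × ℂ → ℝ := fun z => ‖z.1‖ ^ a * ‖z.2‖ ^ b with hg
  set F : ℂ × ℂ → ℝ := (OmegaK 0).indicator g with hF
  have hgc : Continuous g :=
    ((continuous_norm.comp continuous_fst).pow a).mul
      ((continuous_norm.comp continuous_snd).pow b)
  have hFsm : AEStronglyMeasurable F ((volume : Measure ℂ).prod volume) :=
    (hgc.stronglyMeasurable.indicator hΩ).aestronglyMeasurable
  have hFsec : ∀ x : ℂ, (fun y => F (x, y)) =
      (ball (0:ℂ) (Real.exp (-‖x‖))).indicator (fun y => ‖x‖ ^ a * ‖y‖ ^ b) := by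
    intro x
    funext y
    simp only [hF, indicator, omega0_def, mem_setOf_eq, mem_ball_zero_iff, hg]
  have hsec_int : ∀ x : ℂ, Integrable (fun y => F (x, y)) volume := by
    intro x
    rw [hFsec x, integrable_indicator_iff measurableSet_ball]
    exact ((continuous_const.mul (continuous_norm.pow b)).continuousOn.integrableOn_compact
      (isCompact_closedBall _ _)).mono_set ball_subset_closedBall
  set c : ℝ := (b : ℝ) + 2 with hc
  have hcpos : (0:ℝ) < c := by positivity
  set G : ℂ → ℝ := fun x => Real.pi * (‖x‖ ^ a * Real.exp (-(c * ‖x‖))) with hG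
  have hball : ∀ x : ℂ, (volume (ball (0:ℂ) (Real.exp (-‖x‖)))).toReal =
      Real.pi * Real.exp (-‖x‖) ^ 2 := by
    intro x
    rw [Complex.volume_ball]
    rw [ENNReal.toReal_mul, ENNReal.toReal_pow, ENNReal.toReal_ofReal (Real.exp_pos _).le]
    rw [ENNReal.coe_toReal, NNReal.coe_real_pi]
    ring
  have hsec_bound : ∀ x : ℂ, ∫ y, ‖F (x, y)‖ ≤ G x := by
    intro x
    have heq : (fun y => ‖F (x, y)‖) =
        (ball (0:ℂ) (Real.exp (-‖x‖))).indicator (fun y => ‖(fun y => ‖x‖ ^ a * ‖y‖ ^ b) y‖) := by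
      funext y
      rw [show F (x, y) = (ball (0:ℂ) (Real.exp (-‖x‖))).indicator
        (fun y => ‖x‖ ^ a * ‖y‖ ^ b) y from congrFun (hFsec x) y,
        norm_indicator_eq_indicator_norm]
    rw [heq, integral_indicator measurableSet_ball]
    have hb := norm_setIntegral_le_of_norm_le_const (μ := volume)
      (s := ball (0:ℂ) (Real.exp (-‖x‖))) (C := ‖x‖ ^ a * Real.exp (-‖x‖) ^ b)
      (f := fun y => ‖(fun y => ‖x‖ ^ a * ‖y‖ ^ b) y‖)
      measure_ball_lt_top (fun y hy => by
        rw [norm_norm]; exact norm_sq_bound a b x hy)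
    have h1 : ∫ y in ball (0:ℂ) (Real.exp (-‖x‖)), ‖(fun y => ‖x‖ ^ a * ‖y‖ ^ b) y‖ ≤
        (‖x‖ ^ a * Real.exp (-‖x‖) ^ b) * (volume (ball (0:ℂ) (Real.exp (-‖x‖)))).toReal :=
      le_trans (le_abs_self _) hb
    refine h1.trans (le_of_eq ?_)
    rw [hball x, hG]
    have hexp : Real.exp (-‖x‖) ^ b * Real.exp (-‖x‖) ^ 2 = Real.exp (-(c * ‖x‖)) := by
      rw [← pow_add, ← Real.exp_nat_mul, hc]
      push_cast
      ring_nf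
    calc ‖x‖ ^ a * Real.exp (-‖x‖) ^ b * (Real.pi * Real.exp (-‖x‖) ^ 2)
        = Real.pi * (‖x‖ ^ a * (Real.exp (-‖x‖) ^ b * Real.exp (-‖x‖) ^ 2)) := by ring
    _ = Real.pi * (‖x‖ ^ a * Real.exp (-(c * ‖x‖))) := by rw [hexp]
  have hGint : Integrable G := (integrable_aux a hcpos).const_mul Real.pi
  have hFint : Integrable F ((volume : Measure ℂ).prod volume) := by
    refine (integrable_prod_iff hFsm).2 ⟨Filter.Eventually.of_forall hsec_int, ?_⟩
    refine hGint.mono' (hFsm.norm.integral_prod_right') (Filter.Eventually.of_forall fun x => ?_)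
    rw [Real.norm_of_nonneg (integral_nonneg fun y => norm_nonneg _)]
    exact hsec_bound x
  have hInt : IntegrableOn g (OmegaK 0) := (integrable_indicator_iff hΩ).1 hFint
  refine ⟨hInt, ?_⟩
  have step1 : ∫ z in OmegaK 0, g z = ∫ x, ∫ y, F (x, y) := by
    rw [← integral_indicator hΩ, ← hF]
    rw [show (volume : Measure (ℂ × ℂ)) = (volume : Measure ℂ).prod volume from rfl]
    exact integral_prod F hFint
  have step2 : ∫ x, ∫ y, F (x, y) ≤ ∫ x, G x := by
    refine integral_mono hFint.integral_prod_left hGint fun x => ?_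
    refine le_trans (le_trans (le_abs_self _) ?_) (hsec_bound x)
    rw [← Real.norm_eq_abs]
    exact norm_integral_le_integral_norm _
  have step3 : ∫ x, G x = 2 * Real.pi ^ 2 * ((a+1)! : ℝ) / c ^ (a + 2) := by
    simp only [hG]
    rw [integral_const_mul, complex_integral_eq a hcpos]
    ring
  calc ∫ z in OmegaK 0, g z ≤ ∫ x, G x := step1.trans_le step2
  _ = 2 * Real.pi ^ 2 * ((a+1)! : ℝ) / c ^ (a + 2) := step3

lemma central_pos (a b : ℕ) :
    0 < ∫ z in OmegaK 0, ‖z.1‖ ^ a * ‖z.2‖ ^ b := by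
  set e : ℝ := Real.exp (-1) with he
  have hepos : (0:ℝ) < e := Real.exp_pos _
  set S₁ : Set ℂ := ball 0 1 \ closedBall 0 (1/2) with hS₁
  set S₂ : Set ℂ := ball 0 e \ closedBall 0 (e/2) with hS₂
  have hS₁open : IsOpen S₁ := isOpen_ball.sdiff Metric.isClosed_closedBall
  have hS₂open : IsOpen S₂ := isOpen_ball.sdiff Metric.isClosed_closedBall
  have hS₁ne : S₁.Nonempty := by
    refine ⟨((3/4 : ℝ) : ℂ), ?_, ?_⟩
    · rw [mem_ball_zero_iff, Complex.norm_real, Real.norm_eq_abs, _root_.abs_of_nonneg]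
      · norm_num
      · norm_num
    · rw [mem_closedBall_zero_iff, Complex.norm_real, Real.norm_eq_abs, _root_.abs_of_nonneg]
      · norm_num
      · norm_num
  have hS₂ne : S₂.Nonempty := by
    refine ⟨((3/4 * e : ℝ) : ℂ), ?_, ?_⟩
    · rw [mem_ball_zero_iff, Complex.norm_real, Real.norm_eq_abs,
        _root_.abs_of_nonneg (by positivity)]
      nlinarith
    · rw [mem_closedBall_zero_iff, Complex.norm_real, Real.norm_eq_abs,
        _root_.abs_of_nonneg (by positivity)]
      push_neg
      nlinarith
  have hsub : S₁ ×ˢ S₂ ⊆ OmegaK 0 := by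
    rintro ⟨x, y⟩ ⟨hx, hy⟩
    rw [omega0_def, mem_setOf_eq]
    have hx1 : ‖x‖ < 1 := mem_ball_zero_iff.1 hx.1
    have hy1 : ‖y‖ < e := mem_ball_zero_iff.1 hy.1
    exact hy1.trans_le (by rw [he]; exact Real.exp_le_exp.2 (by linarith))
  have hmeas : MeasurableSet (S₁ ×ˢ S₂) :=
    (hS₁open.measurableSet).prod (hS₂open.measurableSet)
  have hvol : volume (S₁ ×ˢ S₂) = volume S₁ * volume S₂ := by
    rw [show (volume : Measure (ℂ × ℂ)) = (volume : Measure ℂ).prod volume from rfl]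
    exact Measure.prod_prod _ _
  have hvol_ne_top : volume (S₁ ×ˢ S₂) ≠ ⊤ := by
    rw [hvol]
    exact ENNReal.mul_ne_top
      ((measure_mono diff_subset).trans_lt measure_ball_lt_top).ne
      ((measure_mono diff_subset).trans_lt measure_ball_lt_top).ne
  have hvol_pos : 0 < volume (S₁ ×ˢ S₂) := by
    rw [hvol]
    exact ENNReal.mul_pos (hS₁open.measure_pos volume hS₁ne).ne'
      (hS₂open.measure_pos volume hS₂ne).ne'
  set c₀ : ℝ := (1/2 : ℝ) ^ a * (e/2) ^ b with hc₀
  have hc₀pos : 0 < c₀ := by positivity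
  have hIntS : IntegrableOn (fun z : ℂ × ℂ => ‖z.1‖ ^ a * ‖z.2‖ ^ b) (S₁ ×ˢ S₂) :=
    (central a b).1.mono_set hsub
  have hbound : ∀ z ∈ S₁ ×ˢ S₂, c₀ ≤ ‖z.1‖ ^ a * ‖z.2‖ ^ b := by
    rintro ⟨x, y⟩ ⟨hx, hy⟩
    have hx2 : (1/2 : ℝ) ≤ ‖x‖ := by
      have := hx.2
      rw [mem_closedBall_zero_iff] at this
      push_neg at this
      exact this.le
    have hy2 : (e/2 : ℝ) ≤ ‖y‖ := by
      have := hy.2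
      rw [mem_closedBall_zero_iff] at this
      push_neg at this
      exact this.le
    exact mul_le_mul (pow_le_pow_left₀ (by norm_num) hx2 a)
      (pow_le_pow_left₀ (by positivity) hy2 b) (by positivity) (by positivity)
  have key := setIntegral_ge_of_const_le hmeas hvol_ne_top hbound hIntS
  have hmono : ∫ z in S₁ ×ˢ S₂, ‖z.1‖ ^ a * ‖z.2‖ ^ b ≤
      ∫ z in OmegaK 0, ‖z.1‖ ^ a * ‖z.2‖ ^ b := by
    refine setIntegral_mono_set (central a b).1 ?_ (HasSubset.Subset.eventuallyLE hsub)
    exact Filter.Eventually.of_forall fun z => by positivity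
  have htoReal : 0 < (volume (S₁ ×ˢ S₂)).toReal :=
    ENNReal.toReal_pos hvol_pos.ne' hvol_ne_top
  rw [smul_eq_mul, measureReal_def] at key
  nlinarith

lemma nat_ineq (k : ℕ) : 20 * (2 * k + 3) ≤ 64 ^ (k + 1) := by
  induction k with
  | zero => norm_num
  | succ n ih =>
    have h64 : 64 ≤ 64 ^ (n + 1) := Nat.le_self_pow (by omega) 64
    calc 20 * (2 * (n+1) + 3) = 20 * (2 * n + 3) + 40 := by ring
    _ ≤ 64 ^ (n+1) + 40 := by omega
    _ ≤ 64 * 64 ^ (n+1) := by omega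
    _ = 64 ^ (n+2) := by ring

lemma pi_sq_lt_ten : Real.pi ^ 2 < 10 := by
  have h := Real.pi_lt_d2
  have h0 := Real.pi_pos
  nlinarith

lemma rpow_lower (k : ℕ) {J : ℝ} (hJpos : 0 < J)
    (hub : J ≤ 64 ^ (k+1) * (2 * (k:ℝ) + 3) ^ (2*k+2)) :
    (1/8 : ℝ) * (1 / (2 * (k:ℝ) + 3)) ≤ (J ^ ((1:ℝ)/2)) ^ (-(1:ℝ)/((k:ℝ)+1)) := by
  have hk1 : (0:ℝ) < (k:ℝ) + 1 := by positivity
  have h2k3 : (0:ℝ) < 2 * (k:ℝ) + 3 := by positivity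
  set q : ℝ := ((1:ℝ)/2) * (-(1:ℝ)/((k:ℝ)+1)) with hq
  have hqnonpos : q ≤ 0 := by
    rw [hq]
    apply mul_nonpos_of_nonneg_of_nonpos (by norm_num)
    apply div_nonpos_of_nonpos_of_nonneg (by norm_num) hk1.le
  have hrw : (J ^ ((1:ℝ)/2)) ^ (-(1:ℝ)/((k:ℝ)+1)) = J ^ q := by
    rw [hq, Real.rpow_mul hJpos.le]
  rw [hrw]
  have hmain : (64 ^ (k+1) * (2 * (k:ℝ) + 3) ^ (2*k+2) : ℝ) ^ q ≤ J ^ q :=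
    Real.rpow_le_rpow_of_nonpos hJpos hub hqnonpos
  refine le_trans (le_of_eq ?_) hmain
  rw [Real.mul_rpow (by positivity) (by positivity)]
  have h1 : ((64:ℝ) ^ (k+1)) ^ q = 1/8 := by
    rw [← Real.rpow_natCast 64 (k+1), ← Real.rpow_mul (by norm_num : (0:ℝ) ≤ 64)]
    have : ((k+1 : ℕ) : ℝ) * q = -(1/2 : ℝ) := by
      rw [hq]
      push_cast
      field_simp
    rw [this, Real.rpow_neg (by norm_num : (0:ℝ) ≤ 64)]
    have h64 : (64:ℝ) ^ ((1:ℝ)/2) = 8 := by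
      rw [show (64:ℝ) = 8 ^ (2:ℕ) by norm_num, ← Real.rpow_natCast (8:ℝ) 2,
        ← Real.rpow_mul (by norm_num : (0:ℝ) ≤ 8)]
      norm_num
    rw [h64]
    norm_num
  have h2 : ((2 * (k:ℝ) + 3) ^ (2*k+2)) ^ q = 1 / (2 * (k:ℝ) + 3) := by
    rw [← Real.rpow_natCast (2 * (k:ℝ) + 3) (2*k+2), ← Real.rpow_mul h2k3.le]
    have : ((2*k+2 : ℕ) : ℝ) * q = -1 := by
      rw [hq]
      push_cast
      field_simp
    rw [this, Real.rpow_neg_one]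
    exact (one_div _).symm
  rw [h1, h2]

end Aux

section Main
open Set Metric Nat

/-- all monomials belong to `A²(Ω₀)` and `Ω₀` satisfies Condition D. -/
theorem Omega0_monomials_and_conditionD :
    (∀ α : ℕ × ℕ, MemBergmanC2 (OmegaK 0) (fun z => z.1 ^ α.1 * z.2 ^ α.2)) ∧
    (¬ Summable fun k : ℕ =>
      (L2normC2 (OmegaK 0) fun z => z.1 ^ (k + 1)) ^ (-(1 : ℝ) / (k + 1))) ∧
    (¬ Summable fun k : ℕ =>
      (L2normC2 (OmegaK 0) fun z => z.2 ^ (k + 1)) ^ (-(1 : ℝ) / (k + 1))) := by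
  refine ⟨?_, ?_, ?_⟩
  · -- monomials in A²
    intro α
    constructor
    · exact ((differentiable_fst.pow α.1).mul (differentiable_snd.pow α.2)).differentiableOn
    · have hcont : Continuous (fun z : ℂ × ℂ => z.1 ^ α.1 * z.2 ^ α.2) :=
        (continuous_fst.pow α.1).mul (continuous_snd.pow α.2)
      refine (memLp_two_iff_integrable_sq_norm hcont.aestronglyMeasurable.restrict).2 ?_
      refine ((central (2*α.1) (2*α.2)).1).congr (Filter.Eventually.of_forall fun z => ?_)
      show ‖z.1‖ ^ (2*α.1) * ‖z.2‖ ^ (2*α.2) = ‖z.1 ^ α.1 * z.2 ^ α.2‖ ^ 2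
      rw [norm_mul, norm_pow, norm_pow, mul_pow, ← pow_mul, ← pow_mul,
        mul_comm α.1 2, mul_comm α.2 2]
  · -- Condition D for z₁
    intro hs
    set T : ℕ → ℝ := fun k =>
      (L2normC2 (OmegaK 0) fun z => z.1 ^ (k + 1)) ^ (-(1 : ℝ) / (k + 1)) with hT
    have hTk : ∀ k : ℕ, (1/8 : ℝ) * (1 / (2 * (k:ℝ) + 3)) ≤ T k := by
      intro k
      set J : ℝ := ∫ z in OmegaK 0, ‖z.1‖ ^ (2*k+2) * ‖z.2‖ ^ 0 with hJ
      have hL : L2normC2 (OmegaK 0) (fun z => z.1 ^ (k + 1)) = J ^ ((1:ℝ)/2) := by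
        unfold L2normC2
        congr 1
        refine integral_congr_ae (Filter.Eventually.of_forall fun z => ?_)
        show ‖z.1 ^ (k+1)‖ ^ 2 = ‖z.1‖ ^ (2*k+2) * ‖z.2‖ ^ 0
        rw [norm_pow, ← pow_mul, pow_zero, mul_one]
        congr 1
        omega
      have hpos : 0 < J := central_pos (2*k+2) 0
      have hub : J ≤ 64 ^ (k+1) * (2 * (k:ℝ) + 3) ^ (2*k+2) := by
        have h1 := (central (2*k+2) 0).2
        rw [← hJ] at h1
        have hden : (1:ℝ) ≤ ((0:ℕ):ℝ) + 2 := by norm_num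
        have h2 : J ≤ 2 * Real.pi ^ 2 * ((2*k+2+1)! : ℝ) := by
          refine h1.trans ?_
          exact _root_.div_le_self (by positivity) (one_le_pow₀ (by norm_num))
        have h3 : (2 * Real.pi ^ 2 * ((2*k+2+1)! : ℝ)) ≤ 20 * ((2*k+3)! : ℝ) := by
          have : (2*k+2+1) = 2*k+3 := by omega
          rw [this]
          have hfnn : (0:ℝ) ≤ ((2*k+3)! : ℝ) := by positivity
          nlinarith [pi_sq_lt_ten, Real.pi_pos]
        have h4 : (20 : ℝ) * ((2*k+3)! : ℝ) ≤ 20 * ((2*k+3 : ℕ) : ℝ) ^ (2*k+3) := by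
          have := Nat.factorial_le_pow (2*k+3)
          have hcast : ((2*k+3)! : ℝ) ≤ ((2*k+3 : ℕ) : ℝ) ^ (2*k+3) := by
            exact_mod_cast this
          linarith
        have h5 : (20 : ℝ) * ((2*k+3 : ℕ) : ℝ) ^ (2*k+3) ≤
            64 ^ (k+1) * (2 * (k:ℝ) + 3) ^ (2*k+2) := by
          have hni : ((20 * (2*k+3) : ℕ) : ℝ) ≤ ((64 ^ (k+1) : ℕ) : ℝ) :=
            Nat.cast_le.2 (nat_ineq k)
          push_cast at hni ⊢
          calc 20 * (2 * (k:ℝ) + 3) ^ (2*k+3)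
              = (20 * (2 * (k:ℝ) + 3)) * (2 * (k:ℝ) + 3) ^ (2*k+2) := by ring
          _ ≤ 64 ^ (k+1) * (2 * (k:ℝ) + 3) ^ (2*k+2) := by
              apply mul_le_mul_of_nonneg_right _ (by positivity)
              linarith
        linarith
      have := rpow_lower k hpos hub
      rw [← hL] at this
      exact this
    have hcomp : ∀ k : ℕ, (1/24 : ℝ) * (1 / ((k:ℝ) + 1)) ≤ T k := by
      intro k
      have hknn : (0:ℝ) ≤ (k:ℝ) := Nat.cast_nonneg k
      have hne : ((k:ℝ)+1) ≠ 0 := by positivity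
      have hne2 : (2*(k:ℝ)+3) ≠ 0 := by positivity
      calc (1/24:ℝ) * (1/((k:ℝ)+1)) = 1/(24*((k:ℝ)+1)) := by
            field_simp
      _ ≤ 1/(8*(2*(k:ℝ)+3)) := one_div_le_one_div_of_le (by positivity) (by linarith)
      _ = (1/8:ℝ) * (1/(2*(k:ℝ)+3)) := by field_simp
      _ ≤ T k := hTk k
    have hsum2 : Summable (fun k : ℕ => (1/24 : ℝ) * (1 / ((k:ℝ) + 1))) :=
      Summable.of_nonneg_of_le (fun k => by positivity) hcomp hs
    have hsum3 : Summable (fun k : ℕ => 1 / ((k:ℝ) + 1)) :=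
      (summable_mul_left_iff (by norm_num : (1/24 : ℝ) ≠ 0)).1 hsum2
    exact Real.not_summable_one_div_natCast
      ((_root_.summable_nat_add_iff 1).1 (by exact_mod_cast hsum3))
  · -- Condition D for z₂
    intro hs
    set T : ℕ → ℝ := fun k =>
      (L2normC2 (OmegaK 0) fun z => z.2 ^ (k + 1)) ^ (-(1 : ℝ) / (k + 1)) with hT
    have hev1 : ∀ᶠ k in Filter.atTop, (1:ℝ) ≤ T k := by
      refine Filter.eventually_atTop.2 ⟨1, fun k hk => ?_⟩
      set J : ℝ := ∫ z in OmegaK 0, ‖z.1‖ ^ 0 * ‖z.2‖ ^ (2*k+2) with hJ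
      have hL : L2normC2 (OmegaK 0) (fun z => z.2 ^ (k + 1)) = J ^ ((1:ℝ)/2) := by
        unfold L2normC2
        congr 1
        refine integral_congr_ae (Filter.Eventually.of_forall fun z => ?_)
        show ‖z.2 ^ (k+1)‖ ^ 2 = ‖z.1‖ ^ 0 * ‖z.2‖ ^ (2*k+2)
        rw [norm_pow, ← pow_mul, pow_zero, one_mul]
        congr 1
        omega
      have hpos : 0 < J := central_pos 0 (2*k+2)
      have hub : J ≤ 1 := by
        have h1 := (central 0 (2*k+2)).2
        rw [← hJ] at h1
        refine h1.trans ?_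
        have hk1 : (1:ℝ) ≤ (k:ℝ) := by exact_mod_cast hk
        have hden : (6:ℝ) ≤ ((2*k+2 : ℕ):ℝ) + 2 := by
          push_cast
          linarith
        rw [div_le_one (by positivity)]
        norm_num
        nlinarith [pi_sq_lt_ten, Real.pi_pos, hden]
      show (1:ℝ) ≤ (L2normC2 (OmegaK 0) fun z => z.2 ^ (k + 1)) ^ (-(1 : ℝ) / ((k:ℝ) + 1))
      rw [hL]
      refine Real.one_le_rpow_of_pos_of_le_one_of_nonpos
        (Real.rpow_pos_of_pos hpos _) (Real.rpow_le_one hpos.le hub (by norm_num)) ?_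
      exact div_nonpos_of_nonpos_of_nonneg (by norm_num) (by positivity)
    have hev2 : ∀ᶠ k in Filter.atTop, T k < 1 :=
      hs.tendsto_atTop_zero.eventually_lt_const (by norm_num)
    obtain ⟨k, hk1, hk2⟩ := (hev1.and hev2).exists
    linarith

end Main
end

section
/- Let f : [0,∞) → (0,∞) be Borel measurable and let Ω = {(z_1, z_2) ∈ ℂ² : |z_2| < f(|z_1|)}. Suppose there exist constants p, C_1, C_2 > 0 such that f(t) ≥ C_1 t^{−p} for all t ≥ C_2. Then for every integer j ≥ p − 1, ∫_Ω |z_1|^{2j} dv(z_1, z_2) = ∞; in particular the monomial z_1^j does not belong to L²(Ω). -/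
open MeasureTheory Complex

open Set Metric
open scoped ENNReal NNReal

lemma harmonic_ennreal_tsum_top (c : ℝ) (hc : 0 < c) (K : ℕ) :
    ∑' n : ℕ, ENNReal.ofReal (c * ((K : ℝ) + n + 2)⁻¹) = ⊤ := by
  by_contra h
  have hsum : Summable fun n : ℕ => (c * ((K : ℝ) + n + 2)⁻¹).toNNReal := by
    rw [← ENNReal.tsum_coe_ne_top_iff_summable]; exact h
  have hsum2 : Summable fun n : ℕ => c * ((K : ℝ) + n + 2)⁻¹ := by
    have := NNReal.summable_coe.mpr hsum
    refine this.congr fun n => ?_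
    exact Real.coe_toNNReal _ (by positivity)
  have hsum3 : Summable fun n : ℕ => ((K : ℝ) + n + 2)⁻¹ :=
    (summable_mul_left_iff hc.ne').mp hsum2
  have hsum4 : Summable fun n : ℕ => ((n + (K + 2) : ℕ) : ℝ)⁻¹ := by
    refine hsum3.congr fun n => ?_; push_cast; ring_nf
  rw [summable_nat_add_iff (f := fun n : ℕ => ((n : ℝ))⁻¹)] at hsum4
  exact Real.not_summable_natCast_inv hsum4

lemma lintegral_inv_sq_norm_top (c : ℝ) (hc : 0 < c) (K : ℕ) :
    ∫⁻ x : ℂ in {x : ℂ | (K : ℝ) < ‖x‖}, ENNReal.ofReal (c * ‖x‖ ^ (-2 : ℝ)) = ⊤ := by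
  set A : ℕ → Set ℂ := fun n => ball 0 ((K : ℝ) + n + 2) \ closedBall 0 ((K : ℝ) + n + 1)
    with hA
  have hAmeas : ∀ n, MeasurableSet (A n) :=
    fun n => measurableSet_ball.diff measurableSet_closedBall
  have hAdisj : Pairwise (Function.onFun Disjoint A) := by
    rw [pairwise_disjoint_on]
    intro m n hmn
    rw [Set.disjoint_left]
    rintro x ⟨hx1, -⟩ ⟨-, hx2⟩
    rw [mem_ball_zero_iff] at hx1
    rw [mem_closedBall_zero_iff] at hx2
    push_neg at hx2
    have : (m : ℝ) + 1 ≤ n := by exact_mod_cast hmn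
    linarith
  have hAsub : (⋃ n, A n) ⊆ {x : ℂ | (K : ℝ) < ‖x‖} := by
    rintro x hx
    obtain ⟨n, hn⟩ := mem_iUnion.mp hx
    have := hn.2
    rw [mem_closedBall_zero_iff] at this
    push_neg at this
    have hn' : (0:ℝ) ≤ n := n.cast_nonneg
    simp only [mem_setOf_eq]
    linarith
  refine top_unique ?_
  calc (⊤ : ℝ≥0∞) = ∑' n : ℕ, ENNReal.ofReal ((c * Real.pi) * ((K : ℝ) + n + 2)⁻¹) :=
        (harmonic_ennreal_tsum_top _ (by positivity) K).symm
    _ ≤ ∑' n : ℕ, ∫⁻ x in A n, ENNReal.ofReal (c * ‖x‖ ^ (-2 : ℝ)) := by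
        refine ENNReal.tsum_le_tsum fun n => ?_
        set a : ℝ := (K : ℝ) + n + 2 with ha
        set b : ℝ := (K : ℝ) + n + 1 with hb
        have hb0 : 0 < b := by positivity
        have hab : b < a := by rw [ha, hb]; linarith
        have ha0 : 0 < a := hb0.trans hab
        have hvol : ENNReal.ofReal (a * Real.pi) ≤ volume (A n) := by
          rw [hA]
          rw [measure_diff (closedBall_subset_ball hab) measurableSet_closedBall.nullMeasurableSet
            (by simp [Complex.volume_closedBall]; exact ENNReal.mul_ne_top (by simp) (by simp))]
          rw [Complex.volume_ball, Complex.volume_closedBall]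
          refine ENNReal.le_sub_of_add_le_right (by simp [ENNReal.mul_ne_top]) ?_
          have hπ : ((NNReal.pi : ℝ≥0∞)) = ENNReal.ofReal Real.pi := by
            rw [← ENNReal.ofReal_coe_nnreal, NNReal.coe_real_pi]
          rw [hπ, ← ENNReal.ofReal_pow hb0.le, ← ENNReal.ofReal_pow ha0.le,
            ← ENNReal.ofReal_mul (by positivity), ← ENNReal.ofReal_mul (by positivity),
            ← ENNReal.ofReal_add (by positivity) (by positivity)]
          refine ENNReal.ofReal_le_ofReal ?_
          have heq : a = b + 1 := by rw [ha, hb]; ring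
          rw [heq]
          nlinarith [mul_nonneg hb0.le Real.pi_pos.le]
        calc ENNReal.ofReal ((c * Real.pi) * a⁻¹)
            = ENNReal.ofReal (c * a ^ (-2 : ℝ)) * ENNReal.ofReal (a * Real.pi) := by
              rw [← ENNReal.ofReal_mul (by positivity)]
              congr 1
              rw [Real.rpow_neg ha0.le]
              have h2 : a ^ (2:ℝ) = a ^ 2 := by
                rw [← Real.rpow_natCast a 2]; norm_num
              rw [h2]
              field_simp
          _ ≤ ENNReal.ofReal (c * a ^ (-2 : ℝ)) * volume (A n) := by
              exact mul_le_mul_right hvol _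
          _ = ∫⁻ _x in A n, ENNReal.ofReal (c * a ^ (-2 : ℝ)) := by
              rw [setLIntegral_const, hA]
          _ ≤ ∫⁻ x in A n, ENNReal.ofReal (c * ‖x‖ ^ (-2 : ℝ)) := by
              refine setLIntegral_mono' (hAmeas n) fun x hx => ?_
              have hx1 : ‖x‖ < a := by
                have := hx.1; rwa [mem_ball_zero_iff] at this
              have hx2 : b < ‖x‖ := by
                have := hx.2; rw [mem_closedBall_zero_iff] at this; push_neg at this
                exact this
              refine ENNReal.ofReal_le_ofReal ?_
              refine mul_le_mul_of_nonneg_left ?_ hc.le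
              exact Real.rpow_le_rpow_of_nonpos (hb0.trans hx2) hx1.le (by norm_num)
    _ = ∫⁻ x in ⋃ n, A n, ENNReal.ofReal (c * ‖x‖ ^ (-2 : ℝ)) :=
        (lintegral_iUnion hAmeas hAdisj _).symm
    _ ≤ ∫⁻ x in {x : ℂ | (K : ℝ) < ‖x‖}, ENNReal.ofReal (c * ‖x‖ ^ (-2 : ℝ)) :=
        lintegral_mono_set hAsub


/-- if the defining function of the Hartogs-type domain
`Ω = {|z₂| < f(|z₁|)}` decays no faster than a power, then the monomials `z₁^j` for
`j ≥ p - 1` fail to be square-integrable on `Ω`. -/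
theorem powerDecay_monomials_not_L2 (f : ℝ → ℝ) (hf : Measurable f)
    (hfpos : ∀ t : ℝ, 0 ≤ t → 0 < f t)
    (Ω : Set (ℂ × ℂ)) (hΩ : Ω = {z : ℂ × ℂ | ‖z.2‖ < f ‖z.1‖})
    (p C₁ C₂ : ℝ) (hp : 0 < p) (hC₁ : 0 < C₁) (hC₂ : 0 < C₂)
    (hdecay : ∀ t : ℝ, C₂ ≤ t → C₁ * t ^ (-p) ≤ f t) :
    ∀ j : ℕ, p - 1 ≤ (j : ℝ) →
      (∫⁻ z in Ω, ENNReal.ofReal (‖z.1‖ ^ (2 * j)) = ⊤) ∧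
      ¬ MemLp (fun z : ℂ × ℂ => z.1 ^ j) 2 (volume.restrict Ω) := by
  intro j hj
  set K : ℕ := ⌈C₂⌉₊ + 1 with hK
  have hK2 : C₂ ≤ (K : ℝ) := by
    have := Nat.le_ceil C₂
    have h1 : ((⌈C₂⌉₊ : ℝ)) ≤ K := by rw [hK]; push_cast; linarith
    linarith
  have hK1 : (1 : ℝ) ≤ K := by
    have : 1 ≤ K := Nat.le_add_left 1 _
    exact_mod_cast this

  set g : ℂ × ℂ → ℝ≥0∞ := fun z => ENNReal.ofReal (‖z.1‖ ^ (2 * j)) with hg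
  set r : ℂ → ℝ := fun x => C₁ * ‖x‖ ^ (-p) with hr
  set T : Set ℂ := {x : ℂ | (K : ℝ) < ‖x‖} with hT
  set S : Set (ℂ × ℂ) := {z : ℂ × ℂ | (K : ℝ) < ‖z.1‖ ∧ ‖z.2‖ < r z.1} with hS
  have hgmeas : Measurable g := (measurable_fst.norm.pow_const _).ennreal_ofReal
  have hTmeas : MeasurableSet T := measurableSet_lt measurable_const measurable_norm
  have hm1 : Measurable fun t : ℝ => t ^ (-p) := by measurability
  have hrmeas : Measurable fun z : ℂ × ℂ => r z.1 := by
    rw [hr]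
    exact (hm1.comp measurable_fst.norm).const_mul C₁
  have hSmeas : MeasurableSet S :=
    (measurableSet_lt measurable_const measurable_fst.norm).inter
      (measurableSet_lt measurable_snd.norm hrmeas)
  have hSsub : S ⊆ Ω := by
    rw [hΩ]
    rintro ⟨z₁, z₂⟩ ⟨h1, h2⟩
    exact h2.trans_le (hdecay _ (hK2.trans h1.le))
  -- Tonelli
  have hfub : ∫⁻ z in S, g z =
      ∫⁻ x in T, ENNReal.ofReal (‖x‖ ^ (2 * j)) * volume (ball (0 : ℂ) (r x)) := by
    rw [← lintegral_indicator hSmeas, Measure.volume_eq_prod,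
      lintegral_prod _ ((hgmeas.indicator hSmeas).aemeasurable),
      ← lintegral_indicator hTmeas]
    refine lintegral_congr fun x => ?_
    by_cases hx : x ∈ T
    · have hy : ∀ y : ℂ, S.indicator g (x, y) =
          (ball (0 : ℂ) (r x)).indicator (fun _ => ENNReal.ofReal (‖x‖ ^ (2 * j))) y := by
        intro y
        by_cases hy' : ‖y‖ < r x
        · rw [indicator_of_mem (by exact ⟨hx, hy'⟩),
            indicator_of_mem (mem_ball_zero_iff.mpr hy')]
        · rw [indicator_of_notMem (fun h => hy' h.2),
            indicator_of_notMem (fun h => hy' (mem_ball_zero_iff.mp h))]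
      simp_rw [hy]
      rw [lintegral_indicator_const measurableSet_ball, indicator_of_mem hx]
    · have hy : ∀ y : ℂ, S.indicator g (x, y) = 0 := fun y =>
        indicator_of_notMem (fun h => hx h.1) _
      simp_rw [hy]
      rw [lintegral_zero, indicator_of_notMem hx]
  -- pointwise lower bound on T
  have hpt : ∀ x ∈ T, ENNReal.ofReal ((Real.pi * C₁ ^ 2) * ‖x‖ ^ (-2 : ℝ)) ≤
      ENNReal.ofReal (‖x‖ ^ (2 * j)) * volume (ball (0 : ℂ) (r x)) := by
    intro x hx
    have hx1 : (1 : ℝ) ≤ ‖x‖ := hK1.trans (le_of_lt hx)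
    have hx0 : (0 : ℝ) < ‖x‖ := lt_of_lt_of_le one_pos hx1
    have hrpos : 0 ≤ r x := by
      rw [hr]; positivity
    rw [Complex.volume_ball]
    have hπ : ((NNReal.pi : ℝ≥0∞)) = ENNReal.ofReal Real.pi := by
      rw [← ENNReal.ofReal_coe_nnreal, NNReal.coe_real_pi]
    rw [hπ, ← ENNReal.ofReal_pow hrpos, ← ENNReal.ofReal_mul (by positivity),
      ← ENNReal.ofReal_mul (by positivity)]
    refine ENNReal.ofReal_le_ofReal ?_
    have key : ‖x‖ ^ (-2 : ℝ) ≤ ‖x‖ ^ (2 * j) * (‖x‖ ^ (-p)) ^ 2 := by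
      have e1 : ‖x‖ ^ (2 * j) * (‖x‖ ^ (-p)) ^ 2 = ‖x‖ ^ ((2 * j : ℝ) + (-p) * 2) := by
        rw [← Real.rpow_natCast ‖x‖ (2 * j), ← Real.rpow_natCast (‖x‖ ^ (-p)) 2,
          ← Real.rpow_mul (norm_nonneg x), ← Real.rpow_add hx0]
        congr 1
        push_cast
        ring
      rw [e1]
      refine Real.rpow_le_rpow_of_exponent_le hx1 ?_
      push_cast
      linarith
    calc Real.pi * C₁ ^ 2 * ‖x‖ ^ (-2 : ℝ)
        ≤ Real.pi * C₁ ^ 2 * (‖x‖ ^ (2 * j) * (‖x‖ ^ (-p)) ^ 2) := by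
          refine mul_le_mul_of_nonneg_left key (by positivity)
      _ = ‖x‖ ^ (2 * j) * ((C₁ * ‖x‖ ^ (-p)) ^ 2 * Real.pi) := by ring
  -- first part
  have h1 : ∫⁻ z in Ω, ENNReal.ofReal (‖z.1‖ ^ (2 * j)) = ⊤ := by
    refine top_unique ?_
    calc (⊤ : ℝ≥0∞) = ∫⁻ x in T, ENNReal.ofReal ((Real.pi * C₁ ^ 2) * ‖x‖ ^ (-2 : ℝ)) :=
          (lintegral_inv_sq_norm_top _ (by positivity) K).symm
      _ ≤ ∫⁻ x in T, ENNReal.ofReal (‖x‖ ^ (2 * j)) * volume (ball (0 : ℂ) (r x)) :=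
          setLIntegral_mono' hTmeas hpt
      _ = ∫⁻ z in S, g z := hfub.symm
      _ ≤ ∫⁻ z in Ω, g z := lintegral_mono_set hSsub
  refine ⟨h1, fun hmem => ?_⟩
  -- second part
  have h2 := hmem.2
  rw [eLpNorm_eq_lintegral_rpow_enorm_toReal (by norm_num) (by norm_num)] at h2
  have h3 : ∫⁻ z in Ω, ‖(fun z : ℂ × ℂ => z.1 ^ j) z‖ₑ ^ (2 : ℝ≥0∞).toReal = ⊤ := by
    rw [← h1]
    refine lintegral_congr fun z => ?_
    rw [← ofReal_norm_eq_enorm,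
      ENNReal.ofReal_rpow_of_nonneg (norm_nonneg _) (by norm_num)]
    congr 1
    rw [ENNReal.toReal_ofNat, show ((2 : ℝ)) = ((2 : ℕ) : ℝ) by norm_num,
      Real.rpow_natCast, norm_pow, ← pow_mul']
  rw [h3] at h2
  simp at h2
end

section
/- Let n ≥ 1, let B ⊆ ℂⁿ be an open Euclidean ball centered at the origin, let j ∈ {1,…,n}, and let p = (p_1,…,p_n) ∈ B with p_j ≠ 0. Set Ω = B \ {p}. Then: (1) for all α, β ∈ ℕⁿ with α ≠ β, ∫_Ω z^α · conj(z^β) dv = 0 (so the hypotheses of all three cases of the orthogonality-to-symmetry theorem hold for Ω); but (2) Ω is not Reinhardt, Ω is not circular, and Ω is not Hartogs in the j-th coordinate. -/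
open MeasureTheory Complex

/-- Let `B` be a Euclidean ball centered at the origin, `p ∈ B` with
`p j ≠ 0`, and `Ω = B \ {p}`. Then the monomials are pairwise orthogonal over `Ω`, yet
`Ω` is neither Reinhardt, circular, nor Hartogs in the `j`-th coordinate. -/
theorem ball_minus_point_orthogonal_but_not_symmetric {n : ℕ} (hn : 1 ≤ n)
    (R : ℝ) (hR : 0 < R) (j : Fin n) (p : Fin n → ℂ)
    (B : Set (Fin n → ℂ)) (hB : B = {z : Fin n → ℂ | ∑ i, ‖z i‖ ^ 2 < R ^ 2})
    (hp : p ∈ B) (hpj : p j ≠ 0)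
    (Ω : Set (Fin n → ℂ)) (hΩ : Ω = B \ {p}) :
    (∀ α β : Fin n → ℕ, α ≠ β →
      ∫ z in Ω, (∏ i, z i ^ α i) * (starRingEnd ℂ) (∏ i, z i ^ β i) = 0) ∧
    ¬ (∀ lam : Fin n → ℂ, (∀ i, ‖lam i‖ = 1) →
        (fun z : Fin n → ℂ => fun i => lam i * z i) '' Ω = Ω) ∧
    ¬ (∀ lam : ℂ, ‖lam‖ = 1 →
        (fun z : Fin n → ℂ => fun i => lam * z i) '' Ω = Ω) ∧
    ¬ (∀ lam : ℂ, ‖lam‖ = 1 →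
        (fun z : Fin n → ℂ => Function.update z j (lam * z j)) '' Ω = Ω) := by
  have hpne : p ≠ 0 := by
    intro h0; exact hpj (by rw [h0]; rfl)
  -- `-p` lies in `Ω`
  have hnegB : ∀ q : Fin n → ℂ, q ∈ B → (-q) ∈ B := by
    intro q hq
    rw [hB] at hq ⊢
    have heq : ∑ i, ‖(-q) i‖ ^ 2 = ∑ i, ‖q i‖ ^ 2 := by
      refine Finset.sum_congr rfl fun i _ => ?_
      simp
    show ∑ i, ‖(-q) i‖ ^ 2 < R ^ 2
    rw [heq]; exact hq
  have hnegp : (-p) ∈ Ω := by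
    rw [hΩ]
    refine ⟨hnegB p hp, ?_⟩
    intro he
    have h2 := congrFun he j
    simp only [Pi.neg_apply, Set.mem_singleton_iff] at h2
    exact hpj (by linear_combination -h2/2 : p j = 0)
  have hpnotΩ : p ∉ Ω := by rw [hΩ]; exact fun h => h.2 rfl
  refine ⟨?_, ?_, ?_, ?_⟩
  · -- orthogonality of monomials
    intro α β hab
    haveI : Nonempty (Fin n) := ⟨j⟩
    set g : (Fin n → ℂ) → ℂ :=
      fun z => (∏ i, z i ^ α i) * (starRingEnd ℂ) (∏ i, z i ^ β i) with hg
    -- reduce to B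
    have hred : ∫ z in Ω, g z = ∫ z in B, g z := by
      apply setIntegral_congr_set
      rw [hΩ]
      exact diff_ae_eq_self.2 (measure_mono_null Set.inter_subset_right (measure_singleton p))
    -- pick the coordinate where the multi-indices differ
    obtain ⟨i, hi⟩ := Function.ne_iff.1 hab
    set a := α i with ha
    set b := β i with hb
    set N : ℕ := a + b + 1 with hN
    set lam : ℂ := Complex.exp (2 * Real.pi * I / N) with hlam
    have hprim : IsPrimitiveRoot lam N := Complex.isPrimitiveRoot_exp N (by omega)
    have hlam1 : ‖lam‖ = 1 := by
      rw [hlam]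
      simp [Complex.norm_exp]
    have hlamne : lam ≠ 0 := by
      intro h0; rw [h0] at hlam1; simp at hlam1
    have hconj : (starRingEnd ℂ) lam = lam⁻¹ := by
      have := Complex.mul_conj lam
      rw [Complex.normSq_eq_norm_sq] at this
      field_simp
      rw [mul_comm]
      rw [this]
      rw [hlam1]
      norm_num
    set c : ℂ := lam ^ a * (starRingEnd ℂ) lam ^ b with hc
    have hcne : c ≠ 1 := by
      intro h1
      rw [hc, hconj, inv_pow] at h1
      have : lam ^ a = lam ^ b := by
        field_simp at h1
        exact h1
      exact hi (hprim.pow_inj (by omega) (by omega) this)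
    -- the rotation map
    set u : Fin n → ℂ := fun i' => if i' = i then lam else 1 with hu
    have hun : ∀ i', ‖u i'‖ = 1 := by
      intro i'; rw [hu]; dsimp only; split <;> simp [hlam1]
    set T : (Fin n → ℂ) → (Fin n → ℂ) := fun z i' => u i' * z i' with hT
    have hmp : MeasurePreserving T volume volume :=
      volume_preserving_pi (fun i' =>
        (rotation ⟨_, mem_sphere_zero_iff_norm.2 (hun i')⟩).measurePreserving)
    have hemb : MeasurableEmbedding T := by
      have : T = ⇑(MeasurableEquiv.piCongrRight (fun i' =>
          ((rotation ⟨_, mem_sphere_zero_iff_norm.2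
            (hun i')⟩).toHomeomorph.toMeasurableEquiv))) := by
        funext z; rfl
      rw [this]
      exact MeasurableEquiv.measurableEmbedding _
    have hpre : T ⁻¹' B = B := by
      rw [hB]
      ext z
      simp only [Set.mem_preimage, Set.mem_setOf_eq, hT]
      have : ∀ i', ‖u i' * z i'‖ ^ 2 = ‖z i'‖ ^ 2 := by
        intro i'; rw [norm_mul, hun i', one_mul]
      rw [Finset.sum_congr rfl fun i' _ => this i']
    -- transformation identity
    have htrans : ∀ z, g (T z) = c * g z := by
      intro z
      rw [hg, hT]
      simp only
      have h1 : (∏ i', (u i' * z i') ^ α i') = lam ^ a * ∏ i', z i' ^ α i' := by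
        simp_rw [mul_pow]
        rw [Finset.prod_mul_distrib]
        congr 1
        rw [Finset.prod_eq_single i]
        · simp [hu, ha]
        · intro b _ hbi; simp [hu, hbi]
        · simp
      have h2 : (∏ i', (u i' * z i') ^ β i') = lam ^ b * ∏ i', z i' ^ β i' := by
        simp_rw [mul_pow]
        rw [Finset.prod_mul_distrib]
        congr 1
        rw [Finset.prod_eq_single i]
        · simp [hu, hb]
        · intro b _ hbi; simp [hu, hbi]
        · simp
      rw [h1, h2, map_mul, map_pow, hc]
      ring
    -- conclude
    have key : ∫ z in B, g z = c * ∫ z in B, g z := by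
      conv_lhs => rw [← hmp.setIntegral_preimage_emb hemb g B, hpre]
      simp_rw [htrans]
      rw [integral_const_mul]
    rw [hred]
    have h0 : (1 - c) * ∫ z in B, g z = 0 := by
      rw [sub_mul, one_mul, ← key, sub_self]
    rcases mul_eq_zero.1 h0 with h | h
    · exact absurd (by linear_combination -h : c = 1) hcne
    · exact h
  · -- not Reinhardt
    intro h
    have h1 := h (fun _ => (-1 : ℂ)) (by intro i; simp)
    have himg : (fun i => (-1 : ℂ) * (-p) i) = p := by
      funext i; simp
    exact hpnotΩ (by rw [← h1]; exact ⟨-p, hnegp, himg⟩)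
  · -- not circular
    intro h
    have h1 := h (-1 : ℂ) (by simp)
    have himg : (fun i => (-1 : ℂ) * (-p) i) = p := by
      funext i; simp
    exact hpnotΩ (by rw [← h1]; exact ⟨-p, hnegp, himg⟩)
  · -- not Hartogs in j
    intro h
    have h1 := h (-1 : ℂ) (by simp)
    set q : Fin n → ℂ := Function.update p j (-p j) with hq
    have hqB : q ∈ B := by
      rw [hB]; rw [hB] at hp
      have heq : ∑ i, ‖q i‖ ^ 2 = ∑ i, ‖p i‖ ^ 2 := by
        refine Finset.sum_congr rfl fun i _ => ?_
        rcases eq_or_ne i j with rfl | hij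
        · simp [hq]
        · simp [hq, Function.update_of_ne hij]
      show ∑ i, ‖q i‖ ^ 2 < R ^ 2
      rw [heq]; exact hp
    have hqp : q ≠ p := by
      intro he
      have h2 := congrFun he j
      simp [hq] at h2
      exact hpj (by linear_combination -h2/2 : p j = 0)
    have hqΩ : q ∈ Ω := by rw [hΩ]; exact ⟨hqB, hqp⟩
    have himg : Function.update q j ((-1) * q j) = p := by
      funext i
      rcases eq_or_ne i j with rfl | hij
      · simp [hq]
      · simp [hq, Function.update_of_ne hij]
    exact hpnotΩ (by rw [← h1]; exact ⟨q, hqΩ, himg⟩)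
end
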